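/- Let λ₁, λ₂, …, λₙ be complex numbers such that λ₁ is real, the multiset {λ₁, …, λₙ} is closed under complex conjugation, and for i = 2, …, n one has Re λᵢ ≤ 0 and |Re λᵢ| ≥ |Im λᵢ|. Let γ₁, …, γₙ be nonnegative real numbers with γ₁ + ⋯ + γₙ = λ₁ + ⋯ + λₙ. Then there exists an n×n entrywise nonnegative real matrix B with constant row sums λ₁ (B·e = λ₁·e), with diagonal entries B_{ii} = γᵢ for i = 1, …, n, and with spectrum {λ₁, …, λₙ}, i.e., the characteristic polynomial of B, viewed over ℂ, equals ∏ᵢ₌₁ⁿ (X − λᵢ). -/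

import Mathlib

open Polynomial Matrix

private lemma sum_two_support {M : Type*} [AddCommMonoid M] {m : Type*} [Fintype m]
    [DecidableEq m] (f : m → M) (a b : m) (hab : a ≠ b)
    (h : ∀ k, k ≠ a → k ≠ b → f k = 0) :
    ∑ k, f k = f a + f b := by
  rw [← Finset.sum_pair hab]
  refine (Finset.sum_subset (Finset.subset_univ _) ?_).symm
  intro x _ hx
  simp only [Finset.mem_insert, Finset.mem_singleton, not_or] at hx
  exact h x hx.1 hx.2

private lemma sum_one_support {M : Type*} [AddCommMonoid M] {m : Type*} [Fintype m]
    [DecidableEq m] (f : m → M) (a : m) (h : ∀ k, k ≠ a → f k = 0) :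
    ∑ k, f k = f a :=
  Finset.sum_eq_single a (fun b _ hb => h b hb) (fun ha => absurd (Finset.mem_univ a) ha)

private lemma charpoly_conj_eq {m : Type*} [Fintype m] [DecidableEq m] {R : Type*} [CommRing R]
    (W W' T : Matrix m m R) (h : W * W' = 1) :
    (W * T * W').charpoly = T.charpoly := by
  have hmap : (W.map (C : R →+* R[X])) * (W'.map (C : R →+* R[X])) = 1 := by
    rw [← Matrix.map_mul, h]
    simp
  have hsc : ∀ (A A' : Matrix m m R[X]), A * A' = 1 →
      A * Matrix.scalar m (X : R[X]) * A' = Matrix.scalar m (X : R[X]) := by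
    intro A A' hAA'
    have hXs : Matrix.scalar m (X : R[X]) = (X : R[X]) • 1 := by
      rw [Matrix.scalar_apply, Matrix.smul_one_eq_diagonal]
    rw [hXs, Matrix.mul_smul, Matrix.mul_one, Matrix.smul_mul, hAA']
  have hch : charmatrix (W * T * W') =
      W.map (C : R →+* R[X]) * charmatrix T * W'.map (C : R →+* R[X]) := by
    show Matrix.scalar m (X : R[X]) - (C : R →+* R[X]).mapMatrix (W * T * W') =
      W.map (C : R →+* R[X]) *
        (Matrix.scalar m (X : R[X]) - (C : R →+* R[X]).mapMatrix T) * W'.map (C : R →+* R[X])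
    rw [Matrix.mul_sub, Matrix.sub_mul, hsc _ _ hmap]
    congr 1
    simp only [RingHom.mapMatrix_apply, Matrix.map_mul, Matrix.mul_assoc]
  rw [Matrix.charpoly, hch, Matrix.det_mul, Matrix.det_mul, Matrix.charpoly]
  have hdet : (W.map (C : R →+* R[X])).det * (W'.map (C : R →+* R[X])).det = 1 := by
    rw [← Matrix.det_mul, hmap, Matrix.det_one]
  calc (W.map (C : R →+* R[X])).det * (charmatrix T).det * (W'.map (C : R →+* R[X])).det
      = (charmatrix T).det * ((W.map (C : R →+* R[X])).det * (W'.map (C : R →+* R[X])).det) := by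
        ring
    _ = (charmatrix T).det := by rw [hdet, mul_one]

private lemma exists_conj_involution {n : ℕ} (lam : Fin n → ℂ)
    (hconj : (Finset.univ.val.map lam).map (starRingEnd ℂ) = Finset.univ.val.map lam) :
    ∃ σ : Fin n → Fin n, (∀ i, σ (σ i) = i) ∧
      (∀ i, lam (σ i) = (starRingEnd ℂ) (lam i)) ∧
      (∀ i, (lam i).im = 0 → σ i = i) := by
  classical
  have hcount : ∀ c : ℂ, (Finset.univ.val.map lam).count ((starRingEnd ℂ) c)
      = (Finset.univ.val.map lam).count c := by
    intro c
    conv_lhs => rw [← hconj]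
    exact Multiset.count_map_eq_count' _ _ (RingHom.injective _) c
  have hcard : ∀ c : ℂ, Fintype.card {i : Fin n // lam i = c}
      = Fintype.card {i : Fin n // lam i = (starRingEnd ℂ) c} := by
    intro c
    have key : ∀ b : ℂ, Fintype.card {i : Fin n // lam i = b}
        = (Finset.univ.val.map lam).count b := by
      intro b
      rw [Fintype.card_subtype, Multiset.count_map, Finset.card_def, Finset.filter_val]
      exact congrArg Multiset.card (Multiset.filter_congr (fun x _ => eq_comm))
    rw [key, key, hcount]
  have φ : ∀ c : ℂ, {i : Fin n // lam i = c} ≃ {i : Fin n // lam i = (starRingEnd ℂ) c} :=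
    fun c => Fintype.equivOfCardEq (hcard c)
  set G : ∀ c : ℂ, {k : Fin n // lam k = c} → Fin n := fun c x => (φ c x).1 with hGdef
  set F : ∀ c : ℂ, {k : Fin n // lam k = (starRingEnd ℂ) c} → Fin n :=
    fun c y => ((φ c).symm y).1 with hFdef
  have hGval : ∀ c x, lam (G c x) = (starRingEnd ℂ) c := fun c x => (φ c x).2
  have hFval : ∀ c y, lam (F c y) = c := fun c y => ((φ c).symm y).2
  have hGcong : ∀ (c₁ c₂ : ℂ) (h : c₁ = c₂) (x₁ : {k : Fin n // lam k = c₁})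
      (x₂ : {k : Fin n // lam k = c₂}), (x₁ : Fin n) = x₂ → G c₁ x₁ = G c₂ x₂ := by
    rintro c₁ c₂ rfl x₁ x₂ h
    congr 1
    exact Subtype.ext h
  have hFcong : ∀ (c₁ c₂ : ℂ) (h : c₁ = c₂) (y₁ : {k : Fin n // lam k = (starRingEnd ℂ) c₁})
      (y₂ : {k : Fin n // lam k = (starRingEnd ℂ) c₂}), (y₁ : Fin n) = y₂ → F c₁ y₁ = F c₂ y₂ := by
    rintro c₁ c₂ rfl y₁ y₂ h
    congr 1
    exact Subtype.ext h
  have hFG : ∀ (c : ℂ) (x : {k : Fin n // lam k = c}) (p : lam (G c x) = (starRingEnd ℂ) c),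
      F c ⟨G c x, p⟩ = (x : Fin n) := by
    intro c x p
    have : (⟨G c x, p⟩ : {k : Fin n // lam k = (starRingEnd ℂ) c}) = φ c x := Subtype.ext rfl
    rw [hFdef]
    simp only [this, Equiv.symm_apply_apply]
  have hGF : ∀ (c : ℂ) (y : {k : Fin n // lam k = (starRingEnd ℂ) c}) (p : lam (F c y) = c),
      G c ⟨F c y, p⟩ = (y : Fin n) := by
    intro c y p
    have : (⟨F c y, p⟩ : {k : Fin n // lam k = c}) = (φ c).symm y := Subtype.ext rfl
    rw [hGdef]
    simp only [this, Equiv.apply_symm_apply]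
  set σ : Fin n → Fin n := fun i =>
    if 0 < (lam i).im then G (lam i) ⟨i, rfl⟩
    else if (lam i).im < 0 then
      F ((starRingEnd ℂ) (lam i)) ⟨i, (Complex.conj_conj (lam i)).symm⟩
    else i with hσdef
  have hfix : ∀ i, (lam i).im = 0 → σ i = i := by
    intro i hi
    rw [hσdef]
    simp only [hi, lt_irrefl, if_neg (lt_irrefl (0:ℝ))]
    norm_num
  have hσlam : ∀ i, lam (σ i) = (starRingEnd ℂ) (lam i) := by
    intro i
    rw [hσdef]
    by_cases h1 : 0 < (lam i).im
    · simp only [if_pos h1]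
      exact hGval _ _
    · by_cases h2 : (lam i).im < 0
      · simp only [if_neg h1, if_pos h2]
        exact hFval _ _
      · have h0 : (lam i).im = 0 := le_antisymm (not_lt.mp h1) (not_lt.mp h2)
        simp only [if_neg h1, if_neg h2]
        exact (Complex.conj_eq_iff_im.mpr h0).symm
  refine ⟨σ, ?_, hσlam, hfix⟩
  intro i
  by_cases h1 : 0 < (lam i).im
  · have hσi : σ i = G (lam i) ⟨i, rfl⟩ := by rw [hσdef]; simp only [if_pos h1]
    have hj : lam (σ i) = (starRingEnd ℂ) (lam i) := hσlam i
    have him : (lam (σ i)).im < 0 := by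
      rw [hj, Complex.conj_im]
      linarith
    have h1' : ¬ 0 < (lam (σ i)).im := by linarith
    have hstep : σ (σ i) = F ((starRingEnd ℂ) (lam (σ i)))
        ⟨σ i, (Complex.conj_conj (lam (σ i))).symm⟩ := by
      show (if 0 < (lam (σ i)).im then G (lam (σ i)) ⟨σ i, rfl⟩ else if (lam (σ i)).im < 0 then F ((starRingEnd ℂ) (lam (σ i))) ⟨σ i, (Complex.conj_conj (lam (σ i))).symm⟩ else σ i) = _
      simp only [if_neg h1', if_pos him]
    rw [hstep]
    have hcc : (starRingEnd ℂ) (lam (σ i)) = lam i := by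
      rw [hj, Complex.conj_conj]
    have := hFcong ((starRingEnd ℂ) (lam (σ i))) (lam i) hcc
      ⟨σ i, (Complex.conj_conj (lam (σ i))).symm⟩
      ⟨σ i, by rw [hj]⟩ rfl
    rw [this]
    have hval2 : lam (G (lam i) ⟨i, rfl⟩) = (starRingEnd ℂ) (lam i) := hGval _ _
    rw [hFcong (lam i) (lam i) rfl ⟨σ i, by rw [hj]⟩ ⟨G (lam i) ⟨i, rfl⟩, hval2⟩ hσi]
    exact hFG (lam i) ⟨i, rfl⟩ _
  · by_cases h2 : (lam i).im < 0
    · have hσi : σ i = F ((starRingEnd ℂ) (lam i)) ⟨i, (Complex.conj_conj (lam i)).symm⟩ := by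
        rw [hσdef]; simp only [if_neg h1, if_pos h2]
      have hj : lam (σ i) = (starRingEnd ℂ) (lam i) := hσlam i
      have him : 0 < (lam (σ i)).im := by
        rw [hj, Complex.conj_im]
        linarith
      have hstep : σ (σ i) = G (lam (σ i)) ⟨σ i, rfl⟩ := by
        show (if 0 < (lam (σ i)).im then G (lam (σ i)) ⟨σ i, rfl⟩ else if (lam (σ i)).im < 0 then F ((starRingEnd ℂ) (lam (σ i))) ⟨σ i, (Complex.conj_conj (lam (σ i))).symm⟩ else σ i) = _
        simp only [if_pos him]
      rw [hstep]
      have := hGcong (lam (σ i)) ((starRingEnd ℂ) (lam i)) hj ⟨σ i, rfl⟩ ⟨σ i, hj⟩ rfl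
      rw [this]
      have hval2 : lam (F ((starRingEnd ℂ) (lam i)) ⟨i, (Complex.conj_conj (lam i)).symm⟩)
          = (starRingEnd ℂ) (lam i) := hFval _ _
      rw [hGcong ((starRingEnd ℂ) (lam i)) ((starRingEnd ℂ) (lam i)) rfl ⟨σ i, hj⟩
        ⟨F ((starRingEnd ℂ) (lam i)) ⟨i, (Complex.conj_conj (lam i)).symm⟩, hval2⟩ hσi]
      exact hGF ((starRingEnd ℂ) (lam i)) ⟨i, (Complex.conj_conj (lam i)).symm⟩ _
    · have h0 : (lam i).im = 0 := le_antisymm (not_lt.mp h1) (not_lt.mp h2)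
      rw [hfix i h0, hfix i h0]

section construction

variable {n : ℕ} (lam : Fin n → ℂ) (σ : Fin n → Fin n) (z : Fin n) (γ : Fin n → ℝ)

private def Dmat : Matrix (Fin n) (Fin n) ℝ := fun i j =>
  if i = z ∨ j = z then 0 else if j = i then -(lam i).re else if j = σ i then (lam i).im else 0

private def Bmat : Matrix (Fin n) (Fin n) ℝ := fun i j =>
  γ j + (if j = z then ∑ k, Dmat lam σ z i k else Dmat lam σ z j j - Dmat lam σ z i j)

private lemma Dmat_zrow (j : Fin n) : Dmat lam σ z z j = 0 := by simp [Dmat]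

private lemma Dmat_zcol (i : Fin n) : Dmat lam σ z i z = 0 := by simp [Dmat]

private lemma Dmat_diag (j : Fin n) (hj : j ≠ z) : Dmat lam σ z j j = -(lam j).re := by
  simp [Dmat, hj]

private lemma Dmat_pair (i : Fin n) (hi : i ≠ z) (hσi : σ i ≠ i) (hσiz : σ i ≠ z) :
    Dmat lam σ z i (σ i) = (lam i).im := by
  simp [Dmat, hi, hσiz, hσi]

private lemma Dmat_off (i j : Fin n) (hji : j ≠ i) (hjσ : j ≠ σ i) : Dmat lam σ z i j = 0 := by
  simp [Dmat, hji, hjσ]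

private lemma Dmat_rowsum (hσσ : ∀ i, σ (σ i) = i) (hσz : σ z = z) (i : Fin n) (hi : i ≠ z) :
    ∑ k, Dmat lam σ z i k = -(lam i).re + (if σ i = i then 0 else (lam i).im) := by
  by_cases h : σ i = i
  · rw [sum_one_support _ i (fun k hk => Dmat_off lam σ z i k hk (by rw [h]; exact hk)),
      Dmat_diag lam σ z i hi, if_pos h, add_zero]
  · have hσiz : σ i ≠ z := by
      intro hc
      exact hi (by rw [← hσσ i, hc, hσz])
    rw [sum_two_support _ i (σ i) (fun hc => h hc.symm)
        (fun k hk1 hk2 => Dmat_off lam σ z i k hk1 hk2),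
      Dmat_diag lam σ z i hi, Dmat_pair lam σ z i hi h hσiz, if_neg h]

private lemma Bmat_rowsum (hσσ : ∀ i, σ (σ i) = i) (hσz : σ z = z)
    (hsre : ∑ j, γ j = ∑ j, (lam j).re) (i : Fin n) :
    ∑ j, Bmat lam σ z γ i j = (lam z).re := by
  have hsplit : ∀ j, Bmat lam σ z γ i j
      = γ j + ((Dmat lam σ z j j - Dmat lam σ z i j)
        + (if j = z then ∑ k, Dmat lam σ z i k else 0)) := by
    intro j
    show γ j + _ = _
    congr 1
    by_cases hj : j = z
    · subst hj
      rw [if_pos rfl, if_pos rfl, Dmat_zrow, Dmat_zcol]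
      ring
    · rw [if_neg hj, if_neg hj, add_zero]
  rw [Finset.sum_congr rfl (fun j _ => hsplit j), Finset.sum_add_distrib,
    Finset.sum_add_distrib, Finset.sum_sub_distrib]
  rw [Finset.sum_ite_eq' Finset.univ z (fun _ => ∑ k, Dmat lam σ z i k),
    if_pos (Finset.mem_univ z)]
  have hdd : ∑ j, Dmat lam σ z j j = ∑ j, (if j = z then 0 else -(lam j).re) := by
    refine Finset.sum_congr rfl (fun j _ => ?_)
    by_cases hj : j = z
    · subst hj; rw [if_pos rfl, Dmat_zrow]
    · rw [if_neg hj, Dmat_diag lam σ z j hj]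
  rw [hdd, hsre]
  have : ∑ j, (lam j).re + (∑ j, (if j = z then 0 else -(lam j).re)
      - ∑ j, Dmat lam σ z i j + ∑ k, Dmat lam σ z i k)
      = ∑ j, ((lam j).re + (if j = z then 0 else -(lam j).re)) := by
    rw [Finset.sum_add_distrib]
    ring
  rw [this]
  have : ∀ j, (lam j).re + (if j = z then 0 else -(lam j).re)
      = (if j = z then (lam j).re else 0) := by
    intro j
    by_cases hj : j = z <;> simp [hj]
  rw [Finset.sum_congr rfl (fun j _ => this j),
    Finset.sum_ite_eq' Finset.univ z (fun j => (lam j).re), if_pos (Finset.mem_univ z)]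

private lemma Bmat_diag (i : Fin n) : Bmat lam σ z γ i i = γ i := by
  show γ i + _ = γ i
  by_cases hi : i = z
  · rw [if_pos hi]
    have hzero : ∀ k, Dmat lam σ z i k = 0 := fun k => by simp [Dmat, hi]
    rw [Finset.sum_congr rfl (fun k _ => hzero k), Finset.sum_const_zero, add_zero]
  · rw [if_neg hi, sub_self, add_zero]

private lemma Bmat_nonneg (hσσ : ∀ i, σ (σ i) = i) (hσz : σ z = z)
    (hσlam : ∀ i, lam (σ i) = (starRingEnd ℂ) (lam i))
    (hF : ∀ i, i ≠ z → (lam i).re ≤ 0 ∧ |(lam i).im| ≤ |(lam i).re|)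
    (hγ : ∀ i, 0 ≤ γ i) (i j : Fin n) : 0 ≤ Bmat lam σ z γ i j := by
  have habs : ∀ k, k ≠ z → |(lam k).im| ≤ -(lam k).re := by
    intro k hk
    rw [← abs_of_nonpos (hF k hk).1]
    exact (hF k hk).2
  show 0 ≤ γ j + _
  by_cases hj : j = z
  · rw [if_pos hj]
    by_cases hi : i = z
    · have hzero : ∀ k, Dmat lam σ z i k = 0 := fun k => by simp [Dmat, hi]
      rw [Finset.sum_congr rfl (fun k _ => hzero k), Finset.sum_const_zero, add_zero]
      exact hγ j
    · rw [Dmat_rowsum lam σ z hσσ hσz i hi]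
      have h1 : 0 ≤ -(lam i).re + (if σ i = i then 0 else (lam i).im) := by
        by_cases h : σ i = i
        · rw [if_pos h, add_zero]
          linarith [(hF i hi).1]
        · rw [if_neg h]
          have := habs i hi
          have := neg_abs_le (lam i).im
          linarith
      linarith [hγ j]
  · rw [if_neg hj]
    by_cases hij : j = i
    · rw [hij, sub_self, add_zero]
      exact hγ i
    · by_cases hiz : i = z
      · rw [(by simp [Dmat, hiz] : Dmat lam σ z i j = 0), sub_zero,
          Dmat_diag lam σ z j hj]
        linarith [(hF j hj).1, hγ j]
      · by_cases hjs : j = σ i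
        · have hσi : σ i ≠ i := fun hc => hij (hjs.trans hc)
          have hσiz : σ i ≠ z := hjs ▸ hj
          rw [(by rw [hjs] : Dmat lam σ z i j = Dmat lam σ z i (σ i)),
            Dmat_pair lam σ z i hiz hσi hσiz]
          have hre : (lam j).re = (lam i).re := by rw [hjs, hσlam i, Complex.conj_re]
          rw [Dmat_diag lam σ z j hj, hre]
          have := habs i hiz
          have := le_abs_self (lam i).im
          linarith [hγ j]
        · rw [Dmat_off lam σ z i j hij hjs, sub_zero, Dmat_diag lam σ z j hj]
          linarith [(hF j hj).1, hγ j]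

private noncomputable def Smat : Matrix (Fin n) (Fin n) ℂ := fun i j =>
  if j = z then 1 else if i = j then 1 else 0

private noncomputable def Smat' : Matrix (Fin n) (Fin n) ℂ := fun i j =>
  if i = j then 1 else if j = z then -1 else 0

private noncomputable def Qmat : Matrix (Fin n) (Fin n) ℂ := fun i j =>
  if i = j then 1 else if i = σ j ∧ σ j ≠ j then Complex.I else 0

private noncomputable def Qmat' : Matrix (Fin n) (Fin n) ℂ := fun i j =>
  (if i = j then 1 else if i = σ j ∧ σ j ≠ j then -Complex.I else 0) *
    (if σ j = j then 1 else (2 : ℂ)⁻¹)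

private noncomputable def Tmat : Matrix (Fin n) (Fin n) ℂ := fun i j =>
  if i = j then lam (σ j)
  else if i = z ∧ j ≠ z then
    ((γ j + Dmat lam σ z j j : ℝ) : ℂ)
      + (if σ j = j then 0 else Complex.I * ((γ (σ j) + Dmat lam σ z (σ j) (σ j) : ℝ) : ℂ))
  else 0

private noncomputable def T1mat : Matrix (Fin n) (Fin n) ℂ := fun i j =>
  if j = z then (if i = z then ((lam z).re : ℂ) else 0)
  else if i = z then ((Bmat lam σ z γ z j : ℝ) : ℂ)
  else -((Dmat lam σ z i j : ℝ) : ℂ)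

private lemma SmatSmat' : Smat (n := n) z * Smat' z = 1 := by
  ext i j
  rw [Matrix.mul_apply]
  by_cases hi : i = z
  · rw [sum_one_support _ z (fun k hk => by simp [Smat, hi, hk, Ne.symm hk])]
    by_cases hj : j = z
    · simp [Smat, Smat', Matrix.one_apply, hi, hj]
    · have hzj : z ≠ j := fun h => hj h.symm
      simp [Smat, Smat', Matrix.one_apply, hi, hj, hzj]
  · rw [sum_two_support _ z i (Ne.symm hi) (fun k hk1 hk2 => by simp [Smat, hk1, hk2, Ne.symm hk1, Ne.symm hk2])]
    by_cases hj : j = z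
    · simp [Smat, Smat', Matrix.one_apply, hi, hj]
    · have hzj : z ≠ j := fun h => hj h.symm
      simp [Smat, Smat', Matrix.one_apply, hi, hj, hzj]

private lemma QmatQmat' (hσσ : ∀ i, σ (σ i) = i) :
    Qmat σ * Qmat' σ = (1 : Matrix (Fin n) (Fin n) ℂ) := by
  ext i j
  rw [Matrix.mul_apply]
  by_cases hs : σ j = j
  · rw [sum_one_support _ j (fun k hk => by simp [Qmat', hk, hs])]
    simp [Qmat, Qmat', hs, Matrix.one_apply]
  · have hjσ : j ≠ σ j := fun h => hs h.symm
    rw [sum_two_support _ j (σ j) hjσ (fun k hk1 hk2 => by simp [Qmat', hk1, hk2, hs])]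
    have hQjj : Qmat σ j j = 1 := by simp [Qmat]
    have hQ'jj : Qmat' σ j j = (2 : ℂ)⁻¹ := by simp [Qmat', hs]
    have hQ'sj : Qmat' σ (σ j) j = -Complex.I * (2 : ℂ)⁻¹ := by
      simp [Qmat', hs, Ne.symm hjσ]
    by_cases hij : i = j
    · have hQis : Qmat σ j (σ j) = Complex.I := by
        have h1 : j ≠ σ j := hjσ
        have h2 : j = σ (σ j) := by rw [hσσ]
        have h3 : σ (σ j) ≠ σ j := by rw [hσσ]; exact hjσ
        show (if j = σ j then 1 else if j = σ (σ j) ∧ σ (σ j) ≠ σ j then Complex.I else 0) = _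
        rw [if_neg h1, if_pos ⟨h2, h3⟩]
      rw [hij, hQjj, hQ'jj, hQis, hQ'sj, Matrix.one_apply_eq]
      linear_combination (-(2 : ℂ)⁻¹) * Complex.I_mul_I
    · by_cases his : i = σ j
      · have hQij : Qmat σ i j = Complex.I := by simp [Qmat, hij, his, hs]
        have hQisj : Qmat σ i (σ j) = 1 := by simp [Qmat, his]
        rw [hQij, hQ'jj, hQisj, hQ'sj, Matrix.one_apply_ne hij]
        ring
      · have hQij : Qmat σ i j = 0 := by simp [Qmat, hij, his, hs]
        have hQisj : Qmat σ i (σ j) = 0 := by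
          have h2 : i ≠ σ (σ j) := by rw [hσσ]; exact hij
          simp [Qmat, his, h2]
        rw [hQij, hQisj, Matrix.one_apply_ne hij]
        ring

private lemma BS_eq_ST1 (hrow : ∀ i, ∑ k, Bmat lam σ z γ i k = (lam z).re) :
    (Bmat lam σ z γ).map (algebraMap ℝ ℂ) * Smat z = Smat z * T1mat lam σ z γ := by
  ext i j
  rw [Matrix.mul_apply, Matrix.mul_apply]
  by_cases hj : j = z
  · have hL : ∀ k, (Bmat lam σ z γ).map (algebraMap ℝ ℂ) i k * Smat z k j
        = ((Bmat lam σ z γ i k : ℝ) : ℂ) := by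
      intro k
      simp [Smat, hj, Matrix.map_apply, Complex.coe_algebraMap]
    rw [Finset.sum_congr rfl (fun k _ => hL k)]
    rw [sum_one_support (fun k => Smat z i k * T1mat lam σ z γ k j) z
      (fun k hk => by simp [T1mat, hj, hk])]
    have hv : Smat (n := n) z i z * T1mat lam σ z γ z j = ((lam z).re : ℂ) := by
      simp [Smat, T1mat, hj]
    rw [hv, ← hrow i]
    push_cast
    rfl
  · rw [sum_one_support
      (fun k => (Bmat lam σ z γ).map (algebraMap ℝ ℂ) i k * Smat z k j) j
      (fun k hk => by simp [Smat, hj, hk])]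
    have hSjj : Smat (n := n) z j j = 1 := by simp [Smat]
    rw [hSjj, mul_one]
    by_cases hi : i = z
    · rw [sum_one_support (fun k => Smat z i k * T1mat lam σ z γ k j) z
        (fun k hk => by simp [Smat, hi, hk, Ne.symm hk])]
      have hv : Smat (n := n) z i z * T1mat lam σ z γ z j
          = ((Bmat lam σ z γ z j : ℝ) : ℂ) := by
        simp [Smat, T1mat, hj]
      rw [hv, hi]
      simp [Matrix.map_apply, Complex.coe_algebraMap]
    · rw [sum_two_support (fun k => Smat z i k * T1mat lam σ z γ k j) z i (Ne.symm hi)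
        (fun k hk1 hk2 => by simp [Smat, hk1, hk2, Ne.symm hk1, Ne.symm hk2])]
      have hv1 : Smat (n := n) z i z * T1mat lam σ z γ z j
          = ((Bmat lam σ z γ z j : ℝ) : ℂ) := by simp [Smat, T1mat, hj]
      have hv2 : Smat (n := n) z i i * T1mat lam σ z γ i j
          = -((Dmat lam σ z i j : ℝ) : ℂ) := by simp [Smat, T1mat, hj, hi]
      rw [hv1, hv2]
      have hreal : Bmat lam σ z γ i j = Bmat lam σ z γ z j - Dmat lam σ z i j := by
        show γ j + _ = (γ j + _) - _
        rw [if_neg hj, if_neg hj, Dmat_zrow]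
        ring
      rw [Matrix.map_apply, hreal]
      push_cast [Complex.coe_algebraMap]
      ring

private lemma T1Q_eq_QT (hσσ : ∀ i, σ (σ i) = i) (hσz : σ z = z)
    (hσlam : ∀ i, lam (σ i) = (starRingEnd ℂ) (lam i))
    (him0 : ∀ j, σ j = j → (lam j).im = 0) (hrealz : (lam z).im = 0) :
    T1mat lam σ z γ * Qmat σ = Qmat σ * Tmat lam σ z γ := by
  have hinj : ∀ a b : Fin n, σ a = σ b → a = b := by
    intro a b h
    rw [← hσσ a, h, hσσ]
  have hσne : ∀ a : Fin n, a ≠ z → σ a ≠ z := by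
    intro a ha h
    exact ha (by rw [← hσσ a, h, hσz])
  have hre : ∀ a, (lam (σ a)).re = (lam a).re := fun a => by rw [hσlam a, Complex.conj_re]
  have him : ∀ a, (lam (σ a)).im = -(lam a).im := fun a => by rw [hσlam a, Complex.conj_im]
  ext i j
  rw [Matrix.mul_apply, Matrix.mul_apply]
  by_cases hj : j = z
  · rw [hj]
    rw [sum_one_support (fun k => T1mat lam σ z γ i k * Qmat σ k z) z
      (fun k hk => by simp [Qmat, hk, hσz])]
    rw [sum_one_support (fun k => Qmat σ i k * Tmat lam σ z γ k z) z
      (fun k hk => by simp [Tmat, hk])]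
    have hQzz : Qmat (n := n) σ z z = 1 := by simp [Qmat]
    have hTzz : Tmat lam σ z γ z z = lam z := by simp [Tmat, hσz]
    rw [hQzz, mul_one, hTzz]
    by_cases hi : i = z
    · have hT1 : T1mat lam σ z γ i z = ((lam z).re : ℂ) := by simp [T1mat, hi]
      have hQ : Qmat (n := n) σ i z = 1 := by simp [Qmat, hi]
      rw [hT1, hQ, one_mul]
      exact Complex.ext (by simp) (by simp [hrealz])
    · have hT1 : T1mat lam σ z γ i z = 0 := by simp [T1mat, hi]
      have hQ : Qmat (n := n) σ i z = 0 := by simp [Qmat, hi, hσz]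
      rw [hT1, hQ]
      ring
  · have hσjz : σ j ≠ z := hσne j hj
    have hzj : z ≠ j := fun h => hj h.symm
    have hRHS : ∑ k, Qmat σ i k * Tmat lam σ z γ k j
        = Qmat σ i j * lam (σ j) + Qmat σ i z * Tmat lam σ z γ z j := by
      rw [sum_two_support (fun k => Qmat σ i k * Tmat lam σ z γ k j) j z hj
        (fun k hk1 hk2 => by simp [Tmat, hk1, hk2])]
      have hTjj : Tmat lam σ z γ j j = lam (σ j) := by simp [Tmat]
      rw [hTjj]
    rw [hRHS]
    by_cases hs : σ j = j
    · rw [sum_one_support (fun k => T1mat lam σ z γ i k * Qmat σ k j) j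
        (fun k hk => by simp [Qmat, hk, hs])]
      have hQjj : Qmat (n := n) σ j j = 1 := by simp [Qmat]
      rw [hQjj, mul_one]
      have hTzj : Tmat lam σ z γ z j = ((γ j + Dmat lam σ z j j : ℝ) : ℂ) := by
        simp [Tmat, hzj, hj, hs]
      rw [hTzj]
      by_cases hi : i = z
      · have hT1 : T1mat lam σ z γ i j = ((Bmat lam σ z γ z j : ℝ) : ℂ) := by
          simp [T1mat, hj, hi]
        have hQzj : Qmat (n := n) σ i j = 0 := by simp [Qmat, hi, hzj, hs]
        have hQiz : Qmat (n := n) σ i z = 1 := by simp [Qmat, hi]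
        have hBzj : Bmat lam σ z γ z j = γ j + Dmat lam σ z j j := by
          show γ j + _ = _
          rw [if_neg hj, Dmat_zrow, sub_zero]
        rw [hT1, hQzj, zero_mul, zero_add, hQiz, one_mul, hBzj]
      · have hT1 : T1mat lam σ z γ i j = -((Dmat lam σ z i j : ℝ) : ℂ) := by
          simp [T1mat, hj, hi]
        have hQiz : Qmat (n := n) σ i z = 0 := by simp [Qmat, hi, hσz]
        rw [hT1, hQiz, zero_mul, add_zero]
        by_cases hij : i = j
        · have hQij : Qmat (n := n) σ i j = 1 := by simp [Qmat, hij]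
          rw [hQij, one_mul, (by rw [hij] : Dmat lam σ z i j = Dmat lam σ z j j),
            Dmat_diag lam σ z j hj]
          have hval : lam (σ j) = ((lam j).re : ℂ) - ((lam j).im : ℂ) * Complex.I := by
            rw [hσlam j]
            exact Complex.ext (by simp) (by simp)
          rw [hval, him0 j hs]
          push_cast
          ring
        · have hQij : Qmat (n := n) σ i j = 0 := by
            have h2 : i ≠ σ j := fun h => hij (h.trans hs)
            simp [Qmat, hij, h2]
          have hD : Dmat lam σ z i j = 0 := by
            refine Dmat_off lam σ z i j (fun h => hij h.symm) (fun h => ?_)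
            have hji : σ j = i := by rw [h, hσσ]
            exact hij (hji.symm.trans hs)
          rw [hQij, zero_mul, hD]
          push_cast
          ring
    · have hjσ : j ≠ σ j := fun h => hs h.symm
      rw [sum_two_support (fun k => T1mat lam σ z γ i k * Qmat σ k j) j (σ j) hjσ
        (fun k hk1 hk2 => by simp [Qmat, hk1, hk2])]
      have hQjj : Qmat (n := n) σ j j = 1 := by simp [Qmat]
      have hQsj : Qmat (n := n) σ (σ j) j = Complex.I := by simp [Qmat, hs, Ne.symm hjσ]
      rw [hQjj, mul_one, hQsj]
      have hTzj : Tmat lam σ z γ z j = ((γ j + Dmat lam σ z j j : ℝ) : ℂ)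
          + Complex.I * ((γ (σ j) + Dmat lam σ z (σ j) (σ j) : ℝ) : ℂ) := by
        simp [Tmat, hzj, hj, hs]
      rw [hTzj]
      have hDjj : Dmat lam σ z j j = -(lam j).re := Dmat_diag lam σ z j hj
      have hDss : Dmat lam σ z (σ j) (σ j) = -(lam j).re := by
        rw [Dmat_diag lam σ z (σ j) hσjz, hre]
      have hDjs : Dmat lam σ z j (σ j) = (lam j).im := Dmat_pair lam σ z j hj hs hσjz
      have hDsj : Dmat lam σ z (σ j) j = -(lam j).im := by
        have h2 := Dmat_pair lam σ z (σ j) hσjz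
          (fun h => hs (hinj _ _ h)) (by rw [hσσ]; exact hj)
        rw [hσσ] at h2
        rw [h2, him]
      by_cases hi : i = z
      · have hT1j : T1mat lam σ z γ i j = ((Bmat lam σ z γ z j : ℝ) : ℂ) := by
          simp [T1mat, hj, hi]
        have hT1s : T1mat lam σ z γ i (σ j) = ((Bmat lam σ z γ z (σ j) : ℝ) : ℂ) := by
          simp [T1mat, hσjz, hi]
        have hQzj : Qmat (n := n) σ i j = 0 := by
          have h2 : i ≠ σ j := by rw [hi]; exact Ne.symm hσjz
          simp [Qmat, hi, hzj, Ne.symm hσjz]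
        have hQiz : Qmat (n := n) σ i z = 1 := by simp [Qmat, hi]
        have hBzj : Bmat lam σ z γ z j = γ j + Dmat lam σ z j j := by
          show γ j + _ = _
          rw [if_neg hj, Dmat_zrow, sub_zero]
        have hBzs : Bmat lam σ z γ z (σ j) = γ (σ j) + Dmat lam σ z (σ j) (σ j) := by
          show γ (σ j) + _ = _
          rw [if_neg hσjz, Dmat_zrow, sub_zero]
        rw [hT1j, hT1s, hQzj, zero_mul, zero_add, hQiz, one_mul, hBzj, hBzs]
        ring
      · have hiσz : σ i ≠ z := hσne i hi
        have hT1j : T1mat lam σ z γ i j = -((Dmat lam σ z i j : ℝ) : ℂ) := by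
          simp [T1mat, hj, hi]
        have hT1s : T1mat lam σ z γ i (σ j) = -((Dmat lam σ z i (σ j) : ℝ) : ℂ) := by
          simp [T1mat, hσjz, hi]
        have hQiz : Qmat (n := n) σ i z = 0 := by simp [Qmat, hi, hσz]
        rw [hT1j, hT1s, hQiz, zero_mul, add_zero]
        by_cases hij : i = j
        · have hQij : Qmat (n := n) σ i j = 1 := by simp [Qmat, hij]
          rw [hQij, one_mul, (by rw [hij] : Dmat lam σ z i j = Dmat lam σ z j j),
            (by rw [hij] : Dmat lam σ z i (σ j) = Dmat lam σ z j (σ j)), hDjj, hDjs]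
          have hval : lam (σ j) = ((lam j).re : ℂ) - ((lam j).im : ℂ) * Complex.I := by
            rw [hσlam j]
            exact Complex.ext (by simp) (by simp)
          rw [hval]
          push_cast
          ring
        · by_cases his : i = σ j
          · have hQij : Qmat (n := n) σ i j = Complex.I := by simp [Qmat, hij, his, hs]
            rw [hQij, (by rw [his] : Dmat lam σ z i j = Dmat lam σ z (σ j) j),
              (by rw [his] : Dmat lam σ z i (σ j) = Dmat lam σ z (σ j) (σ j)), hDsj, hDss]
            have hval : lam (σ j) = ((lam j).re : ℂ) - ((lam j).im : ℂ) * Complex.I := by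
              rw [hσlam j]
              exact Complex.ext (by simp) (by simp)
            rw [hval]
            push_cast
            linear_combination ((lam j).im : ℂ) * Complex.I_mul_I
          · have hQij : Qmat (n := n) σ i j = 0 := by simp [Qmat, hij, his]
            have hD1 : Dmat lam σ z i j = 0 := by
              refine Dmat_off lam σ z i j (fun h => hij h.symm) (fun h => ?_)
              have hji : σ j = i := by rw [h, hσσ]
              exact his hji.symm
            have hD2 : Dmat lam σ z i (σ j) = 0 := by
              refine Dmat_off lam σ z i (σ j) (fun h => his h.symm)
                (fun h => hij (hinj j i h).symm)
            rw [hQij, zero_mul, hD1, hD2]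
            push_cast
            ring

end construction

/-- For a self-conjugate list `λ₁, …, λₙ` of Suleimanova type (`Re λᵢ ≤ 0` and
`|Re λᵢ| ≥ |Im λᵢ|` for `i ≥ 2`) and nonnegative reals `γ₁, …, γₙ` with
`∑ γᵢ = ∑ λᵢ`, there is a nonnegative matrix `B` with constant row sums `λ₁`,
diagonal entries `γ₁, …, γₙ` and spectrum `{λ₁, …, λₙ}`. -/
theorem suleimanova_prescribed_diagonal {n : ℕ} (hn : 0 < n)
    (lam : Fin n → ℂ) (γ : Fin n → ℝ)
    (hreal : (lam ⟨0, hn⟩).im = 0)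
    (hconj : (Finset.univ.val.map lam).map (starRingEnd ℂ) = Finset.univ.val.map lam)
    (hF : ∀ i : Fin n, i ≠ ⟨0, hn⟩ →
      (lam i).re ≤ 0 ∧ |(lam i).im| ≤ |(lam i).re|)
    (hγ : ∀ i, 0 ≤ γ i)
    (hsum : (∑ i, (γ i : ℂ)) = ∑ i, lam i) :
    ∃ B : Matrix (Fin n) (Fin n) ℝ,
      (∀ i j, 0 ≤ B i j) ∧
      (B.mulVec (fun _ => 1) = fun _ => (lam ⟨0, hn⟩).re) ∧
      (∀ i, B i i = γ i) ∧
      B.charpoly.map (algebraMap ℝ ℂ) = ∏ i, (X - C (lam i)) := by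
  classical
  obtain ⟨σ, hσσ, hσlam, hfix⟩ := exists_conj_involution lam hconj
  set z : Fin n := ⟨0, hn⟩ with hz
  have hσz : σ z = z := hfix z hreal
  have him0 : ∀ j, σ j = j → (lam j).im = 0 := by
    intro j h
    have h1 := hσlam j
    rw [h] at h1
    exact Complex.conj_eq_iff_im.mp h1.symm
  have hsre : ∑ j, γ j = ∑ j, (lam j).re := by
    have h1 := congrArg Complex.re hsum
    rw [Complex.re_sum, Complex.re_sum] at h1
    simpa using h1
  have hrow : ∀ i, ∑ k, Bmat lam σ z γ i k = (lam z).re :=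
    Bmat_rowsum lam σ z γ hσσ hσz hsre
  refine ⟨Bmat lam σ z γ, Bmat_nonneg lam σ z γ hσσ hσz hσlam hF hγ, ?_, Bmat_diag lam σ z γ, ?_⟩
  · funext i
    show ∑ j, Bmat lam σ z γ i j * 1 = _
    rw [Finset.sum_congr rfl (fun j _ => mul_one _), hrow i]
  · have hWW' : (Smat z * Qmat σ) * (Qmat' σ * Smat' z) = 1 := by
      rw [Matrix.mul_assoc, ← Matrix.mul_assoc (Qmat σ), QmatQmat' σ hσσ,
        Matrix.one_mul, SmatSmat' z]
    have hBW : (Bmat lam σ z γ).map (algebraMap ℝ ℂ) * (Smat z * Qmat σ)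
        = (Smat z * Qmat σ) * Tmat lam σ z γ := by
      rw [← Matrix.mul_assoc, BS_eq_ST1 lam σ z γ hrow, Matrix.mul_assoc,
        T1Q_eq_QT lam σ z γ hσσ hσz hσlam him0 hreal, ← Matrix.mul_assoc]
    have hBc : (Bmat lam σ z γ).map (algebraMap ℝ ℂ)
        = (Smat z * Qmat σ) * Tmat lam σ z γ * (Qmat' σ * Smat' z) := by
      calc (Bmat lam σ z γ).map (algebraMap ℝ ℂ)
          = (Bmat lam σ z γ).map (algebraMap ℝ ℂ) * 1 := (Matrix.mul_one _).symm
        _ = (Bmat lam σ z γ).map (algebraMap ℝ ℂ)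
            * ((Smat z * Qmat σ) * (Qmat' σ * Smat' z)) := by rw [hWW']
        _ = ((Bmat lam σ z γ).map (algebraMap ℝ ℂ) * (Smat z * Qmat σ))
            * (Qmat' σ * Smat' z) := (Matrix.mul_assoc _ _ _).symm
        _ = (Smat z * Qmat σ) * Tmat lam σ z γ * (Qmat' σ * Smat' z) := by rw [hBW]
    have hcp : ((Bmat lam σ z γ).map (algebraMap ℝ ℂ)).charpoly
        = (Tmat lam σ z γ).charpoly := by
      rw [hBc]
      exact charpoly_conj_eq _ _ _ hWW'
    rw [← Matrix.charpoly_map, hcp]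
    have htri : (Tmat lam σ z γ).BlockTriangular id := by
      intro a b hab
      have hab' : (b : Fin n) < a := hab
      have haz : a ≠ z := by
        intro h
        rw [h] at hab'
        exact Nat.not_lt_zero b.val hab'
      have hba : a ≠ b := ne_of_gt hab'
      simp [Tmat, hba, haz]
    rw [Matrix.charpoly_of_upperTriangular _ htri]
    have hdiag : ∀ i, Tmat lam σ z γ i i = lam (σ i) := fun i => by simp [Tmat]
    rw [Finset.prod_congr rfl (fun i _ => by rw [hdiag i])]
    exact Equiv.prod_comp ⟨σ, σ, hσσ, hσσ⟩ (fun i => X - C (lam i))
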